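/- arXiv:2007.08947 — 3 statements merged into one kernel-verified Lean document; each statement's English description precedes it below -/
import Mathlib

section
/- Let T > 0 and let σ ∈ L¹((0,T); ℝ) be such that σ is not equal to 0 almost everywhere on (0,T). Then there exist real numbers 0 < r₁ < r₂ such that ∫₀^T e^{−pt} σ(t) dt ≠ 0 for every p ∈ (r₁, r₂). -/
open MeasureTheory

/-- A continuous function times an integrable function is integrable on `Ioo 0 T`. -/
lemma aux_integrable_mul {T : ℝ} {σ : ℝ → ℝ} (hσ : IntegrableOn σ (Set.Ioo 0 T))
    (b : ℝ → ℝ) (hb : Continuous b) :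
    IntegrableOn (fun t => b t * σ t) (Set.Ioo 0 T) := by
  obtain ⟨C, hC⟩ := (isCompact_Icc (a := (0:ℝ)) (b := T)).exists_bound_of_continuousOn
    hb.continuousOn
  refine Integrable.bdd_mul (c := C) hσ hb.aestronglyMeasurable.restrict ?_
  filter_upwards [ae_restrict_mem measurableSet_Ioo] with t ht
  exact hC t (Set.Ioo_subset_Icc_self ht)

/-- The finite Laplace transform of a nonzero integrable function on `(0,T)` is
nonvanishing on some nonempty open interval of positive reals. -/
theorem laplace_nonvanishing_on_interval (T : ℝ) (hT : 0 < T) (σ : ℝ → ℝ)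
    (hσ : IntegrableOn σ (Set.Ioo 0 T))
    (hne : ¬ σ =ᵐ[volume.restrict (Set.Ioo 0 T)] 0) :
    ∃ r₁ r₂ : ℝ, 0 < r₁ ∧ r₁ < r₂ ∧
      ∀ p ∈ Set.Ioo r₁ r₂, (∫ t in Set.Ioo 0 T, Real.exp (-p * t) * σ t) ≠ 0 := by
  by_contra hcon
  push_neg at hcon
  set F : ℝ → ℝ := fun p => ∫ t in Set.Ioo 0 T, Real.exp (-p * t) * σ t with hF
  -- Step 1 : F is continuous
  have hFcont : Continuous F := by
    rw [continuous_iff_continuousAt]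
    intro p₀
    apply continuousAt_of_dominated (bound := fun t => Real.exp ((|p₀| + 1) * T) * |σ t|)
    · filter_upwards with p
      exact (aux_integrable_mul hσ (fun t => Real.exp (-p * t))
        (Real.continuous_exp.comp (continuous_const.mul continuous_id))).aestronglyMeasurable
    · filter_upwards [Metric.ball_mem_nhds p₀ one_pos] with p hp
      filter_upwards [ae_restrict_mem measurableSet_Ioo] with t ht
      have hpb : |p| ≤ |p₀| + 1 := by
        have := abs_sub_abs_le_abs_sub p p₀
        have h2 : dist p p₀ < 1 := hp
        rw [Real.dist_eq] at h2
        linarith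
      have h1 : -p * t ≤ (|p₀| + 1) * T := by
        calc -p * t ≤ |(-p) * t| := le_abs_self _
        _ = |p| * |t| := by rw [abs_mul, abs_neg]
        _ ≤ (|p₀| + 1) * T := by
            apply mul_le_mul hpb _ (abs_nonneg t) (by positivity)
            rw [abs_of_pos ht.1]; exact ht.2.le
      rw [norm_mul, Real.norm_eq_abs, Real.norm_eq_abs,
        abs_of_pos (Real.exp_pos _)]
      exact mul_le_mul_of_nonneg_right (Real.exp_le_exp.2 h1) (abs_nonneg _)
    · exact (hσ.norm).const_mul _
    · filter_upwards with t
      exact (Real.continuous_exp.comp ((continuous_neg).mul continuous_const)).continuousAt.mul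
        continuousAt_const
  -- Step 2 : F vanishes on [0, ∞)
  have hF0 : ∀ p : ℝ, 0 ≤ p → F p = 0 := by
    intro p hp
    have hclosed : IsClosed {q : ℝ | F q = 0} := isClosed_eq hFcont continuous_const
    have hmem : p ∈ closure {q : ℝ | F q = 0} := by
      rw [Metric.mem_closure_iff]
      intro ε hε
      obtain ⟨q, hq, hq0⟩ := hcon (p + ε / 3) (p + 2 * ε / 3) (by linarith) (by linarith)
      obtain ⟨hq1, hq2⟩ := hq
      refine ⟨q, hq0, ?_⟩
      rw [Real.dist_eq, abs_sub_comm, abs_of_pos (by linarith)]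
      linarith
    rwa [hclosed.closure_eq] at hmem
  -- Step 3 : all "moments" against powers of exp(-t) vanish
  have hmom : ∀ n : ℕ, ∫ t in Set.Ioo 0 T, (Real.exp (-t)) ^ n * σ t = 0 := by
    intro n
    have h := hF0 n (Nat.cast_nonneg n)
    simp only [hF] at h
    calc ∫ t in Set.Ioo 0 T, Real.exp (-t) ^ n * σ t
        = ∫ t in Set.Ioo 0 T, Real.exp (-(n:ℝ) * t) * σ t := by
          apply setIntegral_congr_fun measurableSet_Ioo
          intro t _
          simp only
          rw [← Real.exp_nat_mul]
          ring_nf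
      _ = 0 := h
  -- Step 4 : the integral against any continuous function vanishes
  have hcontint : ∀ b : ℝ → ℝ, Continuous b → ∫ t in Set.Ioo 0 T, b t * σ t = 0 := by
    intro b hb
    -- Stone-Weierstrass on Icc 0 T
    set e : C(Set.Icc (0:ℝ) T, ℝ) :=
      ⟨fun x => Real.exp (-(x : ℝ)), Real.continuous_exp.comp (continuous_neg.comp continuous_subtype_val)⟩ with he
    set A : Subalgebra ℝ C(Set.Icc (0:ℝ) T, ℝ) := Algebra.adjoin ℝ {e} with hA
    have hsep : A.SeparatesPoints := by
      intro x y hxy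
      refine ⟨e, ⟨e, Algebra.subset_adjoin rfl, rfl⟩, ?_⟩
      simp only [he, ContinuousMap.coe_mk]
      intro h
      apply hxy
      have := Real.exp_injective h
      exact Subtype.ext (neg_injective this)
    -- integral against elements of A vanishes
    have hAint : ∀ a : C(Set.Icc (0:ℝ) T, ℝ), a ∈ A →
        ∫ t in Set.Ioo 0 T, a (Set.projIcc 0 T hT.le t) * σ t = 0 := by
      intro a ha
      rw [hA, Algebra.adjoin_singleton_eq_range_aeval] at ha
      obtain ⟨P, rfl⟩ := ha
      show ∫ t in Set.Ioo 0 T, (Polynomial.aeval e P) (Set.projIcc 0 T hT.le t) * σ t = 0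
      have hrw : ∀ t ∈ Set.Ioo 0 T,
          (Polynomial.aeval e P) (Set.projIcc 0 T hT.le t) * σ t
          = ∑ i ∈ Finset.range (P.natDegree + 1), P.coeff i * ((Real.exp (-t)) ^ i * σ t) := by
        intro t ht
        rw [Polynomial.aeval_continuousMap_apply]
        rw [Polynomial.eval_eq_sum_range, Finset.sum_mul]
        congr 1
        ext i
        have : ((e (Set.projIcc 0 T hT.le t)) : ℝ) = Real.exp (-t) := by
          simp only [he, ContinuousMap.coe_mk]
          congr 1
          rw [Set.projIcc_of_mem hT.le ⟨ht.1.le, ht.2.le⟩]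
        rw [this]; ring
      rw [setIntegral_congr_fun measurableSet_Ioo hrw, integral_finset_sum]
      · apply Finset.sum_eq_zero
        intro i _
        rw [integral_const_mul, hmom i, mul_zero]
      · intro i _
        exact (aux_integrable_mul hσ (fun t => (Real.exp (-t)) ^ i)
          ((Real.continuous_exp.comp continuous_neg).pow i)).const_mul _
    -- approximate b by elements of A
    have key : ∀ ε : ℝ, 0 < ε → |∫ t in Set.Ioo 0 T, b t * σ t| ≤ ε * ∫ t in Set.Ioo 0 T, |σ t| := by
      intro ε hε
      obtain ⟨a, hanear⟩ := ContinuousMap.exists_mem_subalgebra_near_continuous_of_separatesPoints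
        A hsep (fun x : Set.Icc (0:ℝ) T => b x) (hb.comp continuous_subtype_val) ε hε
      have h1 : ∫ t in Set.Ioo 0 T, (a : C(Set.Icc (0:ℝ) T, ℝ)) (Set.projIcc 0 T hT.le t) * σ t = 0 :=
        hAint _ a.2
      have hsub : ∫ t in Set.Ioo 0 T,
          (b t - (a : C(Set.Icc (0:ℝ) T, ℝ)) (Set.projIcc 0 T hT.le t)) * σ t
          = (∫ t in Set.Ioo 0 T, b t * σ t)
            - ∫ t in Set.Ioo 0 T, (a : C(Set.Icc (0:ℝ) T, ℝ)) (Set.projIcc 0 T hT.le t) * σ t := by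
        have hsub' := integral_sub (aux_integrable_mul hσ b hb)
          (aux_integrable_mul hσ
            (fun t => (a : C(Set.Icc (0:ℝ) T, ℝ)) (Set.projIcc 0 T hT.le t))
            ((ContinuousMap.continuous _).comp continuous_projIcc))
        rw [← hsub']
        apply setIntegral_congr_fun measurableSet_Ioo
        intro t _
        simp only
        ring
      have h2 : ∫ t in Set.Ioo 0 T, b t * σ t = ∫ t in Set.Ioo 0 T,
          (b t - (a : C(Set.Icc (0:ℝ) T, ℝ)) (Set.projIcc 0 T hT.le t)) * σ t := by
        rw [hsub, h1, sub_zero]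
      rw [h2]
      calc |∫ t in Set.Ioo 0 T, (b t - (a : C(Set.Icc (0:ℝ) T, ℝ)) (Set.projIcc 0 T hT.le t)) * σ t|
          ≤ ∫ t in Set.Ioo 0 T, |(b t - (a : C(Set.Icc (0:ℝ) T, ℝ)) (Set.projIcc 0 T hT.le t)) * σ t| :=
            by
              rw [← Real.norm_eq_abs]
              exact (norm_integral_le_integral_norm _).trans (le_of_eq (by simp [Real.norm_eq_abs, abs_mul]))
        _ ≤ ∫ t in Set.Ioo 0 T, ε * |σ t| := by
            apply setIntegral_mono_on
            · exact (aux_integrable_mul hσ _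
                ((hb.sub ((ContinuousMap.continuous _).comp continuous_projIcc))) ).abs
            · exact (hσ.abs).const_mul _
            · exact measurableSet_Ioo
            · intro t ht
              rw [abs_mul]
              apply mul_le_mul_of_nonneg_right _ (abs_nonneg _)
              have := hanear (Set.projIcc 0 T hT.le t)
              rw [Real.norm_eq_abs] at this
              have hproj : ((Set.projIcc 0 T hT.le t : Set.Icc (0:ℝ) T) : ℝ) = t := by
                rw [Set.projIcc_of_mem hT.le ⟨ht.1.le, ht.2.le⟩]
              rw [hproj] at this
              rw [abs_sub_comm] at this
              exact this.le
        _ = ε * ∫ t in Set.Ioo 0 T, |σ t| := integral_const_mul ε _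
    -- let ε → 0
    by_contra hnz
    have habs : 0 < |∫ t in Set.Ioo 0 T, b t * σ t| := abs_pos.mpr hnz
    have hIσ : 0 ≤ ∫ t in Set.Ioo 0 T, |σ t| := integral_nonneg fun t => abs_nonneg _
    rcases eq_or_lt_of_le hIσ with h | h
    · have := key 1 one_pos
      rw [← h, mul_zero] at this
      linarith
    · have hkey := key (|∫ t in Set.Ioo 0 T, b t * σ t| / (2 * ∫ t in Set.Ioo 0 T, |σ t|))
        (by positivity)
      have h2 : |∫ t in Set.Ioo 0 T, b t * σ t| / (2 * ∫ t in Set.Ioo 0 T, |σ t|)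
          * ∫ t in Set.Ioo 0 T, |σ t| = |∫ t in Set.Ioo 0 T, b t * σ t| / 2 := by
        field_simp
      rw [h2] at hkey
      linarith
  -- Step 5 : conclude σ = 0 a.e. via test functions
  apply hne
  set g : ℝ → ℝ := Set.indicator (Set.Ioo 0 T) σ with hg
  have hgint : Integrable g := by
    rw [hg, integrable_indicator_iff measurableSet_Ioo]
    exact hσ
  have hgzero : ∀ᵐ x ∂(volume : Measure ℝ), g x = 0 := by
    apply ae_eq_zero_of_integral_contDiff_smul_eq_zero hgint.locallyIntegrable
    intro φ hφ _
    have : ∫ x, φ x • g x = ∫ t in Set.Ioo 0 T, φ t * σ t := by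
      rw [← integral_indicator measurableSet_Ioo]
      congr 1
      ext x
      by_cases hx : x ∈ Set.Ioo 0 T <;>
        simp [hg, Set.indicator_of_mem, Set.indicator_of_notMem, hx]
    rw [this]
    exact hcontint φ hφ.continuous
  rw [Filter.EventuallyEq, ae_restrict_iff' measurableSet_Ioo]
  filter_upwards [hgzero] with x hx hxmem
  rw [hg] at hx
  rw [Set.indicator_of_mem hxmem] at hx
  exact hx
end

section
/- Let X be a Banach space, p₀ ∈ ℝ, and let w : (0,∞) → X be strongly measurable with ∫₀^∞ e^{−p₀ t} ‖w(t)‖ dt < ∞. If ∫₀^∞ e^{−pt} w(t) dt = 0 (as a Bochner integral in X) for every real p > p₀, then w(t) = 0 for almost every t > 0. -/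
open MeasureTheory

noncomputable def expMap : ℝ → Set.Icc (0:ℝ) 1 := fun t =>
  ⟨min (Real.exp (-t)) 1, ⟨le_min (Real.exp_pos _).le zero_le_one, min_le_right _ _⟩⟩

lemma continuous_expMap : Continuous expMap :=
  Continuous.subtype_mk ((Real.continuous_exp.comp continuous_neg).min continuous_const) _

lemma expMap_coe {t : ℝ} (ht : 0 < t) : (expMap t : ℝ) = Real.exp (-t) := by
  simp only [expMap]
  exact min_eq_left (Real.exp_le_one_iff.2 (by linarith))

lemma integrable_g_mul {H : ℝ → ℝ} (hH : IntegrableOn H (Set.Ioi 0))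
    (g : C(Set.Icc (0:ℝ) 1, ℝ)) :
    IntegrableOn (fun t => g (expMap t) * H t) (Set.Ioi 0) :=
  hH.bdd_mul ((g.continuous.comp continuous_expMap).aestronglyMeasurable)
    (Filter.Eventually.of_forall fun _ => g.norm_coe_le_norm _)

lemma moment_integrable {H : ℝ → ℝ} (hH : IntegrableOn H (Set.Ioi 0)) (i : ℕ) :
    IntegrableOn (fun t => Real.exp (-t) ^ i * H t) (Set.Ioi 0) := by
  apply Integrable.mono' hH.norm
    (((Real.continuous_exp.comp continuous_neg).pow i).aestronglyMeasurable.mul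
      hH.aestronglyMeasurable)
  filter_upwards [self_mem_ae_restrict measurableSet_Ioi] with t ht
  simp only [Pi.mul_apply, Function.comp_apply, Real.norm_eq_abs, abs_mul]
  have h1 : |Real.exp (-t) ^ i| ≤ 1 := by
    rw [abs_of_nonneg (by positivity)]
    exact pow_le_one₀ (Real.exp_pos _).le (Real.exp_le_one_iff.2 (by simp at ht ⊢; linarith))
  calc |Real.exp (-t) ^ i| * |H t| ≤ 1 * |H t| :=
        mul_le_mul_of_nonneg_right h1 (abs_nonneg _)
    _ = ‖H t‖ := by rw [one_mul, Real.norm_eq_abs]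

/-- Key continuous-map step: if all "moments" of `H` vanish then the pairing with every
continuous function on `[0,1]` (composed with `e^{-t}`) vanishes. -/
lemma pairing_zero {H : ℝ → ℝ} (hH : IntegrableOn H (Set.Ioi 0))
    (hm : ∀ n : ℕ, ∫ t in Set.Ioi (0:ℝ), Real.exp (-t) ^ n * H t = 0)
    (g : C(Set.Icc (0:ℝ) 1, ℝ)) :
    ∫ t in Set.Ioi (0:ℝ), g (expMap t) * H t = 0 := by
  set Φ : C(Set.Icc (0:ℝ) 1, ℝ) → ℝ := fun g => ∫ t in Set.Ioi (0:ℝ), g (expMap t) * H t with hΦ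
  have hC : (0:ℝ) ≤ ∫ t in Set.Ioi (0:ℝ), |H t| := integral_nonneg fun t => abs_nonneg _
  have lip : LipschitzWith (∫ t in Set.Ioi (0:ℝ), |H t|).toNNReal Φ := by
    apply LipschitzWith.of_dist_le_mul
    intro g₁ g₂
    rw [Real.coe_toNNReal _ hC, Real.dist_eq]
    have hsub : Φ g₁ - Φ g₂ = ∫ t in Set.Ioi (0:ℝ), (g₁ (expMap t) - g₂ (expMap t)) * H t := by
      rw [hΦ]
      rw [← integral_sub (integrable_g_mul hH g₁) (integrable_g_mul hH g₂)]
      congr 1; funext t; ring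
    rw [hsub]
    have habs : |∫ t in Set.Ioi (0:ℝ), (g₁ (expMap t) - g₂ (expMap t)) * H t|
        ≤ ∫ t in Set.Ioi (0:ℝ), |(g₁ (expMap t) - g₂ (expMap t)) * H t| := by
      simp only [abs_mul]
      simpa [Real.norm_eq_abs, abs_mul] using
        norm_integral_le_integral_norm (μ := volume.restrict (Set.Ioi 0))
          (f := fun t => (g₁ (expMap t) - g₂ (expMap t)) * H t)
    refine habs.trans ?_
    have hint1 : IntegrableOn (fun t => (g₁ (expMap t) - g₂ (expMap t)) * H t) (Set.Ioi 0) := by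
      have := integrable_g_mul hH (g₁ - g₂)
      simpa [ContinuousMap.sub_apply] using this
    have : ∀ t : ℝ, |(g₁ (expMap t) - g₂ (expMap t)) * H t| ≤ dist g₁ g₂ * |H t| := by
      intro t
      rw [abs_mul]
      apply mul_le_mul_of_nonneg_right _ (abs_nonneg _)
      rw [← Real.dist_eq]
      exact ContinuousMap.dist_apply_le_dist _
    calc (∫ t in Set.Ioi (0:ℝ), |(g₁ (expMap t) - g₂ (expMap t)) * H t|)
        ≤ ∫ t in Set.Ioi (0:ℝ), dist g₁ g₂ * |H t| :=
          integral_mono hint1.abs (hH.abs.const_mul _) this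
      _ = (∫ t in Set.Ioi (0:ℝ), |H t|) * dist g₁ g₂ := by
          rw [integral_const_mul]; ring
  -- Φ vanishes on polynomial functions
  have hpoly : ∀ g ∈ (polynomialFunctions (Set.Icc (0:ℝ) 1) : Set C(Set.Icc (0:ℝ) 1, ℝ)),
      Φ g = 0 := by
    rintro g hg
    rw [polynomialFunctions_coe] at hg
    obtain ⟨q, rfl⟩ := hg
    have hcongr : ∀ t ∈ Set.Ioi (0:ℝ),
        (Polynomial.toContinuousMapOnAlgHom (Set.Icc (0:ℝ) 1) q) (expMap t) * H t
        = ∑ i ∈ Finset.range (q.natDegree + 1),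
            q.coeff i * (Real.exp (-t) ^ i * H t) := by
      intro t ht
      have : ((Polynomial.toContinuousMapOnAlgHom (Set.Icc (0:ℝ) 1) q) (expMap t) : ℝ)
          = q.eval (Real.exp (-t)) := by
        simp [Polynomial.toContinuousMapOnAlgHom, Polynomial.toContinuousMapOn,
          Polynomial.toContinuousMap, expMap_coe ht]
      rw [this, Polynomial.eval_eq_sum_range, Finset.sum_mul]
      exact Finset.sum_congr rfl fun i _ => by ring
    rw [hΦ]
    dsimp only
    rw [setIntegral_congr_fun measurableSet_Ioi hcongr]
    rw [integral_finset_sum _ fun i _ => (moment_integrable hH i).const_mul _]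
    simp only [integral_const_mul, hm, mul_zero, Finset.sum_const_zero]
  -- Stone-Weierstrass
  have hclosed : IsClosed {g : C(Set.Icc (0:ℝ) 1, ℝ) | Φ g = 0} :=
    isClosed_eq lip.continuous continuous_const
  have hmem : g ∈ closure (polynomialFunctions (Set.Icc (0:ℝ) 1) : Set C(Set.Icc (0:ℝ) 1, ℝ)) := by
    rw [← Subalgebra.topologicalClosure_coe, polynomialFunctions.topologicalClosure]
    trivial
  exact closure_minimal hpoly hclosed hmem

lemma moments_zero_ae {H : ℝ → ℝ} (hH : IntegrableOn H (Set.Ioi 0))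
    (hm : ∀ n : ℕ, ∫ t in Set.Ioi (0:ℝ), Real.exp (-t) ^ n * H t = 0) :
    ∀ᵐ t ∂(volume.restrict (Set.Ioi (0:ℝ))), H t = 0 := by
  rw [ae_restrict_iff' measurableSet_Ioi]
  apply isOpen_Ioi.ae_eq_zero_of_integral_contDiff_smul_eq_zero hH.locallyIntegrableOn
  intro g hgsmooth hgcompact hgsupp
  obtain ⟨b, hb0, hb⟩ := hgcompact.exists_pos_le_norm
  have hg0 : ∀ x : ℝ, x ≤ 0 → g x = 0 := by
    intro x hx
    apply image_eq_zero_of_notMem_tsupport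
    intro hmem
    exact absurd (hgsupp hmem) (by simpa using hx)
  -- the transported test function on [0,1]
  set G₀ : Set.Icc (0:ℝ) 1 → ℝ := fun u => g (-Real.log u) with hG₀
  have contG : Continuous G₀ := by
    rw [continuous_iff_continuousAt]
    intro u
    rcases eq_or_lt_of_le u.2.1 with h0 | h0
    · -- u = 0 : locally constant 0
      have hnhds : {v : Set.Icc (0:ℝ) 1 | (v:ℝ) < Real.exp (-b)} ∈ nhds u := by
        apply IsOpen.mem_nhds
        · exact isOpen_lt continuous_subtype_val continuous_const
        · simp only [Set.mem_setOf_eq, ← h0]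
          exact Real.exp_pos _
      have hev : ∀ᶠ v in nhds u, (fun _ => (0:ℝ)) v = G₀ v := by
        filter_upwards [hnhds] with v hv
        rcases eq_or_lt_of_le v.2.1 with hv0 | hv0
        · simp only [hG₀, ← hv0, Real.log_zero, neg_zero]
          exact (hg0 0 le_rfl).symm
        · symm
          apply hb
          rw [Real.norm_eq_abs, abs_of_pos, le_neg]
          · have := (Real.log_lt_iff_lt_exp hv0).2 (by simpa using hv)
            linarith
          · rw [neg_pos]
            apply Real.log_neg hv0
            exact lt_of_lt_of_le hv (Real.exp_le_one_iff.2 (by linarith))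
      exact continuousAt_const.congr hev
    · -- u > 0 : composition of continuous functions
      have : ContinuousAt (fun v : Set.Icc (0:ℝ) 1 => -Real.log (v:ℝ)) u :=
        ((Real.continuousAt_log (ne_of_gt h0)).comp
          continuous_subtype_val.continuousAt).neg
      exact (hgsmooth.continuous.continuousAt).comp this
  have key := pairing_zero hH hm ⟨G₀, contG⟩
  have heq : ∀ t ∈ Set.Ioi (0:ℝ), (⟨G₀, contG⟩ : C(Set.Icc (0:ℝ) 1, ℝ)) (expMap t) * H t
      = g t • H t := by
    intro t ht
    simp only [ContinuousMap.coe_mk, hG₀, smul_eq_mul]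
    rw [expMap_coe ht, Real.log_exp, neg_neg]
  rw [setIntegral_congr_fun measurableSet_Ioi heq] at key
  rw [← key]
  symm
  apply setIntegral_eq_integral_of_forall_compl_eq_zero
  intro x hx
  rw [image_eq_zero_of_notMem_tsupport (fun hmem => hx (hgsupp hmem)), zero_smul]

/-- Uniqueness of the vector-valued Laplace transform: if `w : (0,∞) → X` is
strongly measurable with `∫₀^∞ e^{-p₀ t} ‖w t‖ dt < ∞` and its Laplace transform
vanishes at every real `p > p₀`, then `w = 0` almost everywhere on `(0,∞)`. -/
theorem laplace_transform_uniqueness {X : Type*} [NormedAddCommGroup X]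
    [NormedSpace ℝ X] [CompleteSpace X] (p₀ : ℝ) (w : ℝ → X)
    (hmeas : AEStronglyMeasurable w (volume.restrict (Set.Ioi 0)))
    (hint : IntegrableOn (fun t => Real.exp (-p₀ * t) * ‖w t‖) (Set.Ioi 0))
    (hzero : ∀ p > p₀, (∫ t in Set.Ioi (0:ℝ), Real.exp (-p * t) • w t) = 0) :
    ∀ᵐ t ∂(volume.restrict (Set.Ioi (0:ℝ))), w t = 0 := by
  have main : w =ᵐ[volume.restrict (Set.Ioi (0:ℝ))] 0 := by
    apply ae_eq_zero_of_forall_dual_of_isSeparable ℝ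
      hmeas.stronglyMeasurable_mk.isSeparable_range
    · intro c
      set H : ℝ → ℝ := fun t => Real.exp (-(p₀ + 1) * t) * c (w t) with hHdef
      have hmeasH : AEStronglyMeasurable H (volume.restrict (Set.Ioi 0)) :=
        ((Real.continuous_exp.comp (continuous_const.mul continuous_id)).aestronglyMeasurable).mul
          (c.continuous.comp_aestronglyMeasurable hmeas)
      have hintH : IntegrableOn H (Set.Ioi 0) := by
        apply Integrable.mono' (hint.const_mul ‖c‖) hmeasH
        filter_upwards [self_mem_ae_restrict measurableSet_Ioi] with t ht
        have ht0 : (0:ℝ) < t := ht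
        have h1 : Real.exp (-(p₀ + 1) * t) ≤ Real.exp (-p₀ * t) :=
          Real.exp_le_exp.2 (by nlinarith)
        have h2 : ‖c (w t)‖ ≤ ‖c‖ * ‖w t‖ := c.le_opNorm _
        calc ‖H t‖ = Real.exp (-(p₀ + 1) * t) * ‖c (w t)‖ := by
              simp [hHdef, Real.norm_eq_abs, abs_mul, abs_of_pos (Real.exp_pos _)]
          _ ≤ Real.exp (-p₀ * t) * (‖c‖ * ‖w t‖) := by
              apply mul_le_mul h1 h2 (norm_nonneg _) (Real.exp_pos _).le
          _ = ‖c‖ * (Real.exp (-p₀ * t) * ‖w t‖) := by ring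
      have hmom : ∀ n : ℕ, ∫ t in Set.Ioi (0:ℝ), Real.exp (-t) ^ n * H t = 0 := by
        intro n
        set p : ℝ := p₀ + 1 + n with hp
        have hpgt : p₀ < p := by
          have : (0:ℝ) ≤ n := Nat.cast_nonneg n
          rw [hp]; linarith
        have hintp : IntegrableOn (fun t => Real.exp (-p * t) • w t) (Set.Ioi 0) := by
          apply Integrable.mono' hint
            (((Real.continuous_exp.comp
              (continuous_const.mul continuous_id)).aestronglyMeasurable).smul hmeas)
          filter_upwards [self_mem_ae_restrict measurableSet_Ioi] with t ht
          have ht0 : (0:ℝ) < t := ht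
          have h1 : Real.exp (-p * t) ≤ Real.exp (-p₀ * t) :=
            Real.exp_le_exp.2 (by nlinarith)
          calc ‖Real.exp (-p * t) • w t‖ = Real.exp (-p * t) * ‖w t‖ := by
                rw [norm_smul, Real.norm_eq_abs, abs_of_pos (Real.exp_pos _)]
            _ ≤ Real.exp (-p₀ * t) * ‖w t‖ :=
                mul_le_mul_of_nonneg_right h1 (norm_nonneg _)
        calc (∫ t in Set.Ioi (0:ℝ), Real.exp (-t) ^ n * H t)
            = ∫ t in Set.Ioi (0:ℝ), c (Real.exp (-p * t) • w t) := by
              congr 1; funext t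
              rw [_root_.map_smul, smul_eq_mul, hHdef, ← mul_assoc]
              congr 1
              rw [← Real.exp_nat_mul, ← Real.exp_add]
              congr 1
              rw [hp]; ring
          _ = c (∫ t in Set.Ioi (0:ℝ), Real.exp (-p * t) • w t) :=
              ContinuousLinearMap.integral_comp_comm c hintp
          _ = 0 := by rw [hzero p hpgt, map_zero]
      have hae := moments_zero_ae hintH hmom
      filter_upwards [hae, self_mem_ae_restrict measurableSet_Ioi] with t htH _
      have hexp : Real.exp (-(p₀ + 1) * t) ≠ 0 := (Real.exp_pos _).ne'
      have : Real.exp (-(p₀ + 1) * t) * c (w t) = 0 := htH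
      simpa [hexp] using this
    · filter_upwards [hmeas.ae_eq_mk] with x hx
      rw [hx]
      exact Set.mem_range_self x
  filter_upwards [main] with t ht
  simpa using ht
end

section
/- Let X and Y be complex Banach spaces, θ ∈ (0, π/2), β ∈ (0,1], r ∈ ℝ, C > 0, b > 0, let S : D_{0,θ} → L(X,Y) be analytic with ‖S(w)‖_{L(X,Y)} ≤ C max(|w|^{β−1}, 1) e^{r Re w} for all w ∈ D_{0,θ}, and let F ∈ L¹((0,b); X) be Bochner integrable. Then for every z ∈ D_{b,θ} the Bochner integral G(z) := ∫₀^b S(z − s) F(s) ds exists in Y, and the map G : D_{b,θ} → Y is analytic. -/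
open MeasureTheory

/-- The open sector `D_{s,θ} = {s + r e^{iβ} : r > 0, β ∈ (-θ,θ)} ⊆ ℂ`. -/
def sector (s θ : ℝ) : Set ℂ :=
  {z : ℂ | ∃ r : ℝ, 0 < r ∧ ∃ β : ℝ, β ∈ Set.Ioo (-θ) θ ∧
    z = (s : ℂ) + (r : ℂ) * Complex.exp ((β : ℂ) * Complex.I)}

private lemma sector_eq {s θ : ℝ} (hθ : θ ∈ Set.Ioo 0 (Real.pi / 2)) :
    sector s θ = {z : ℂ | |z.im| < (z.re - s) * Real.tan θ} := by
  obtain ⟨hθ0, hθ2⟩ := hθ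
  have hpi := Real.pi_pos
  have hcosθ : 0 < Real.cos θ := Real.cos_pos_of_mem_Ioo ⟨by linarith, hθ2⟩
  have htanθ : 0 < Real.tan θ := Real.tan_pos_of_pos_of_lt_pi_div_two hθ0 hθ2
  have ht : Real.tan θ * Real.cos θ = Real.sin θ := by
    rw [Real.tan_eq_sin_div_cos]; field_simp
  ext z
  constructor
  · rintro ⟨r, hr, γ, ⟨hγ1, hγ2⟩, rfl⟩
    have hre : ((s : ℂ) + (r : ℂ) * Complex.exp ((γ : ℂ) * Complex.I)).re
        = s + r * Real.cos γ := by
      simp [Complex.add_re, Complex.re_ofReal_mul, Complex.exp_ofReal_mul_I_re]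
    have him : ((s : ℂ) + (r : ℂ) * Complex.exp ((γ : ℂ) * Complex.I)).im
        = r * Real.sin γ := by
      simp [Complex.add_im, Complex.im_ofReal_mul, Complex.exp_ofReal_mul_I_im]
    have hs1 : 0 < Real.sin (θ - γ) :=
      Real.sin_pos_of_pos_of_lt_pi (by linarith) (by linarith)
    have hs2 : 0 < Real.sin (θ + γ) :=
      Real.sin_pos_of_pos_of_lt_pi (by linarith) (by linarith)
    rw [Real.sin_sub] at hs1
    rw [Real.sin_add] at hs2
    simp only [Set.mem_setOf_eq, hre, him]
    have heq : s + r * Real.cos γ - s = r * Real.cos γ := by ring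
    rw [heq, Real.tan_eq_sin_div_cos, abs_lt]
    constructor
    · rw [← mul_div_assoc, ← neg_div, div_lt_iff₀ hcosθ]
      nlinarith [mul_pos hr hs2]
    · rw [← mul_div_assoc, lt_div_iff₀ hcosθ]
      nlinarith [mul_pos hr hs1]
  · intro hz
    simp only [Set.mem_setOf_eq] at hz
    have hres : 0 < z.re - s := by
      by_contra h
      push_neg at h
      nlinarith [abs_nonneg z.im]
    set w : ℂ := z - (s : ℂ) with hw
    have hwre : w.re = z.re - s := by simp [hw]
    have hwim : w.im = z.im := by simp [hw]
    have hw0 : w ≠ 0 := by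
      intro h
      rw [h] at hwre
      simp at hwre
      linarith
    have harg2 : |Complex.arg w| < Real.pi / 2 :=
      Complex.abs_arg_lt_pi_div_two_iff.2 (Or.inl (by rw [hwre]; exact hres))
    have htanarg : Real.tan (Complex.arg w) = w.im / w.re := Complex.tan_arg w
    have htabs : Real.tan |Complex.arg w| = |w.im| / w.re := by
      rcases le_or_gt 0 (Complex.arg w) with h | h
      · have him0 : 0 ≤ w.im := Complex.arg_nonneg_iff.1 h
        rw [abs_of_nonneg h, htanarg, abs_of_nonneg him0]
      · have him0 : w.im < 0 := Complex.arg_neg_iff.1 h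
        rw [abs_of_neg h, Real.tan_neg, htanarg, abs_of_neg him0, neg_div]
    have htt : Real.tan |Complex.arg w| < Real.tan θ := by
      rw [htabs, div_lt_iff₀ (by rw [hwre]; exact hres)]
      rw [hwim, hwre]
      nlinarith
    have habs : |Complex.arg w| < θ := by
      have hmem1 : |Complex.arg w| ∈ Set.Ioo (-(Real.pi / 2)) (Real.pi / 2) :=
        ⟨by nlinarith [abs_nonneg (Complex.arg w)], harg2⟩
      have hmem2 : θ ∈ Set.Ioo (-(Real.pi / 2)) (Real.pi / 2) := ⟨by linarith, hθ2⟩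
      exact (Real.strictMonoOn_tan.lt_iff_lt hmem1 hmem2).1 htt
    refine ⟨‖w‖, norm_pos_iff.mpr hw0, Complex.arg w,
      ⟨by linarith [abs_lt.1 habs |>.1], (abs_lt.1 habs).2⟩, ?_⟩
    rw [Complex.norm_mul_exp_arg_mul_I w, hw]
    ring

private lemma isOpen_sector {s θ : ℝ} (hθ : θ ∈ Set.Ioo 0 (Real.pi / 2)) :
    IsOpen (sector s θ) := by
  rw [sector_eq hθ]
  exact isOpen_lt (continuous_abs.comp Complex.continuous_im)
    ((Complex.continuous_re.sub continuous_const).mul continuous_const)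

private lemma sub_mem_sector {b θ : ℝ} (hθ : θ ∈ Set.Ioo 0 (Real.pi / 2))
    {z : ℂ} (hz : z ∈ sector b θ) {s : ℝ} (hs : s ∈ Set.Icc 0 b) :
    z - (s : ℂ) ∈ sector 0 θ := by
  have htanθ : 0 < Real.tan θ := Real.tan_pos_of_pos_of_lt_pi_div_two hθ.1 hθ.2
  rw [sector_eq hθ] at hz ⊢
  simp only [Set.mem_setOf_eq, Complex.sub_re, Complex.sub_im, Complex.ofReal_re,
    Complex.ofReal_im, sub_zero] at hz ⊢
  nlinarith [hs.2]

/-- If `S` is an analytic operator family on the sector `D_{0,θ}`, `θ ∈ (0,π/2)`,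
satisfying `‖S(w)‖ ≤ C max(|w|^{β-1},1) e^{r Re w}`, and `F ∈ L¹((0,b); X)`, then
for every `z ∈ D_{b,θ}` the Duhamel-type Bochner integral
`G(z) = ∫₀^b S(z-s) F(s) ds` exists and `G` is analytic on `D_{b,θ}`. -/
theorem duhamel_term_analytic_extension
    {X Y : Type*} [NormedAddCommGroup X] [NormedSpace ℂ X]
    [NormedAddCommGroup Y] [NormedSpace ℂ Y] [CompleteSpace Y]
    (θ β r C b : ℝ) (hθ : θ ∈ Set.Ioo 0 (Real.pi / 2)) (hβ : β ∈ Set.Ioc (0:ℝ) 1)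
    (hC : 0 < C) (hb : 0 < b)
    (S : ℂ → X →L[ℂ] Y) (hS : AnalyticOnNhd ℂ S (sector 0 θ))
    (hSb : ∀ w ∈ sector 0 θ,
      ‖S w‖ ≤ C * max (‖w‖ ^ (β - 1)) 1 * Real.exp (r * w.re))
    (F : ℝ → X) (hF : IntegrableOn F (Set.Ioo 0 b)) :
    (∀ z ∈ sector b θ,
      IntegrableOn (fun s : ℝ => S (z - (s : ℂ)) (F s)) (Set.Ioo 0 b)) ∧
    AnalyticOnNhd ℂ (fun z : ℂ => ∫ s in Set.Ioo (0:ℝ) b, S (z - (s : ℂ)) (F s))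
      (sector b θ) := by
  have hopen_b : IsOpen (sector b θ) := isOpen_sector hθ
  have hScont : ContinuousOn S (sector 0 θ) := hS.continuousOn
  have hS' : AnalyticOnNhd ℂ (deriv S) (sector 0 θ) := hS.deriv
  have hS'cont : ContinuousOn (deriv S) (sector 0 θ) := hS'.continuousOn
  -- measurability auxiliary
  have hFm : AEStronglyMeasurable F (volume.restrict (Set.Ioo 0 b)) :=
    hF.aestronglyMeasurable
  have hmeas : ∀ (T : ℂ → X →L[ℂ] Y), ContinuousOn T (sector 0 θ) →
      ∀ z ∈ sector b θ, AEStronglyMeasurable (fun s : ℝ => T (z - (s : ℂ)) (F s))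
        (volume.restrict (Set.Ioo 0 b)) := by
    intro T hT z hz
    have h1 : ContinuousOn (fun s : ℝ => T (z - (s : ℂ))) (Set.Icc 0 b) := by
      apply hT.comp ((continuous_const.sub Complex.continuous_ofReal).continuousOn)
      intro s hs
      exact sub_mem_sector hθ hz hs
    have h2 : AEStronglyMeasurable (fun s : ℝ => T (z - (s : ℂ)))
        (volume.restrict (Set.Ioo 0 b)) :=
      (h1.mono Set.Ioo_subset_Icc_self).aestronglyMeasurable_of_isSeparable measurableSet_Ioo
        (TopologicalSpace.IsSeparable.of_separableSpace _)
    exact isBoundedBilinearMap_apply.continuous.comp_aestronglyMeasurable (h2.prodMk hFm)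
  -- integrability at each point
  have hInt : ∀ z ∈ sector b θ,
      IntegrableOn (fun s : ℝ => S (z - (s : ℂ)) (F s)) (Set.Ioo 0 b) := by
    intro z hz
    set K : Set ℂ := (fun s : ℝ => z - (s : ℂ)) '' Set.Icc 0 b with hK
    have hKc : IsCompact K :=
      isCompact_Icc.image (continuous_const.sub Complex.continuous_ofReal)
    have hKsub : K ⊆ sector 0 θ := by
      rintro w ⟨s, hs, rfl⟩
      exact sub_mem_sector hθ hz hs
    obtain ⟨M, hM⟩ := hKc.exists_bound_of_continuousOn (hScont.mono hKsub)
    apply Integrable.mono' (hF.norm.const_mul M) (hmeas S hScont z hz)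
    rw [ae_restrict_iff' measurableSet_Ioo]
    filter_upwards with s hs
    calc ‖S (z - (s : ℂ)) (F s)‖ ≤ ‖S (z - (s : ℂ))‖ * ‖F s‖ :=
          ContinuousLinearMap.le_opNorm _ _
      _ ≤ M * ‖F s‖ := by
          apply mul_le_mul_of_nonneg_right _ (norm_nonneg _)
          exact hM _ ⟨s, Set.Ioo_subset_Icc_self hs, rfl⟩
  refine ⟨hInt, DifferentiableOn.analyticOnNhd ?_ hopen_b⟩
  intro z₀ hz₀
  obtain ⟨ε, hε, hball⟩ := Metric.nhds_basis_closedBall.mem_iff.1 (hopen_b.mem_nhds hz₀)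
  -- bound for the derivative on a compact set
  set K : Set ℂ := (fun p : ℂ × ℝ => p.1 - (p.2 : ℂ)) '' (Metric.closedBall z₀ ε ×ˢ Set.Icc 0 b)
    with hK
  have hKc : IsCompact K := ((isCompact_closedBall z₀ ε).prod isCompact_Icc).image
    (continuous_fst.sub (Complex.continuous_ofReal.comp continuous_snd))
  have hKsub : K ⊆ sector 0 θ := by
    rintro w ⟨⟨x, s⟩, ⟨hx, hs⟩, rfl⟩
    exact sub_mem_sector hθ (hball hx) hs
  obtain ⟨M, hM⟩ := hKc.exists_bound_of_continuousOn (hS'cont.mono hKsub)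
  have key := hasDerivAt_integral_of_dominated_loc_of_deriv_le (μ := volume.restrict (Set.Ioo 0 b))
    (F := fun (x : ℂ) (s : ℝ) => S (x - (s : ℂ)) (F s))
    (F' := fun (x : ℂ) (s : ℝ) => deriv S (x - (s : ℂ)) (F s))
    (x₀ := z₀) (bound := fun s => M * ‖F s‖) (Metric.ball_mem_nhds z₀ hε)
    ?_ (hInt z₀ hz₀) ?_ ?_ (hF.norm.const_mul M) ?_
  · exact key.2.differentiableAt.differentiableWithinAt
  · filter_upwards [hopen_b.mem_nhds hz₀] with x hx
    exact hmeas S hScont x hx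
  · exact hmeas (deriv S) hS'cont z₀ hz₀
  · rw [ae_restrict_iff' measurableSet_Ioo]
    filter_upwards with s hs x hx
    calc ‖deriv S (x - (s : ℂ)) (F s)‖ ≤ ‖deriv S (x - (s : ℂ))‖ * ‖F s‖ :=
          ContinuousLinearMap.le_opNorm _ _
      _ ≤ M * ‖F s‖ := by
          apply mul_le_mul_of_nonneg_right _ (norm_nonneg _)
          exact hM _ ⟨(x, s), ⟨Metric.ball_subset_closedBall hx, Set.Ioo_subset_Icc_self hs⟩, rfl⟩
  · rw [ae_restrict_iff' measurableSet_Ioo]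
    filter_upwards with s hs x hx
    have hx' : x - (s : ℂ) ∈ sector 0 θ :=
      sub_mem_sector hθ (hball (Metric.ball_subset_closedBall hx)) (Set.Ioo_subset_Icc_self hs)
    have hd : HasDerivAt S (deriv S (x - (s : ℂ))) (x - (s : ℂ)) :=
      ((hS _ hx').differentiableAt).hasDerivAt
    have h1 : HasDerivAt (fun y : ℂ => S (y - (s : ℂ))) (deriv S (x - (s : ℂ))) x := by
      simpa [Function.comp_def] using hd.scomp x ((hasDerivAt_id x).sub_const (s : ℂ))
    simpa using h1.clm_apply (hasDerivAt_const x (F s))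
end
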